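/- For every prime p, every integer n ≥ 1, every integer k ≥ 1, and every real s > 1, ∑_{j=1}^∞ (1/j) · p^{-s j k n} · (p^{jk n} - 1)/(p^{jk} - 1) = ∑_{i=0}^{n-1} -log(1 - p^{k i - s k n}); equivalently, exp of the left-hand side equals ∏_{i=0}^{n-1} (1 - p^{k i}/p^{s k n})^{-1}. -/

import Mathlib

open Finset

/-- The zeta function of the matrix algebra `M_n(𝔽_{p^k})`: for every prime `p`, integers
`n, k ≥ 1` and real `s > 1`,
`∑_{j≥1} (1/j) p^{-sjkn} (p^{jkn}-1)/(p^{jk}-1) = ∑_{i=0}^{n-1} -log(1 - p^{ki - skn})`;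
equivalently, the exponential of the left side equals
`∏_{i=0}^{n-1} (1 - p^{ki}/p^{skn})⁻¹`. -/
theorem zeta_matrix_algebra (p : ℕ) (hp : p.Prime) (n k : ℕ) (hn : 1 ≤ n) (hk : 1 ≤ k)
    (s : ℝ) (hs : 1 < s) :
    (∑' j : ℕ+, (1 / (j : ℝ)) * (p : ℝ) ^ (-(s * ((j : ℕ) * k * n))) *
        (((p : ℝ) ^ ((j : ℕ) * k * n) - 1) / ((p : ℝ) ^ ((j : ℕ) * k) - 1))) =
      ∑ i ∈ range n, -Real.log (1 - (p : ℝ) ^ ((k * i : ℕ) - s * (k * n : ℕ))) := by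
  have hp1 : (1 : ℝ) < p := by exact_mod_cast hp.one_lt
  have hp0 : (0 : ℝ) < p := lt_trans one_pos hp1
  set x : ℕ → ℝ := fun i => (p : ℝ) ^ (((k * i : ℕ) : ℝ) - s * ((k * n : ℕ) : ℝ)) with hxdef
  have hxlt : ∀ i ∈ range n, |x i| < 1 := by
    intro i hi
    rw [mem_range] at hi
    rw [abs_of_pos (Real.rpow_pos_of_pos hp0 _)]
    apply Real.rpow_lt_one_of_one_lt_of_neg hp1
    have h1 : (k * i : ℝ) < (k * n : ℝ) := by
      have hi' : (i : ℝ) < n := by exact_mod_cast hi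
      have hk' : (1 : ℝ) ≤ k := by exact_mod_cast hk
      nlinarith
    have h2 : (k * n : ℝ) ≤ s * (k * n : ℝ) := by
      nlinarith [show (0:ℝ) ≤ (k*n : ℝ) by positivity]
    push_cast
    linarith
  have hsum : ∀ i ∈ range n,
      HasSum (fun j : ℕ+ => (x i) ^ (j : ℕ) / (j : ℕ)) (-Real.log (1 - x i)) := by
    intro i hi
    have h := Real.hasSum_pow_div_log_of_abs_lt_one (hxlt i hi)
    rw [← Equiv.pnatEquivNat.symm.hasSum_iff]
    convert h using 2 with m
    simp [Equiv.pnatEquivNat]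
  have key : ∀ j : ℕ+, (1 / (j : ℝ)) * (p : ℝ) ^ (-(s * ((j : ℕ) * k * n))) *
      (((p : ℝ) ^ ((j : ℕ) * k * n) - 1) / ((p : ℝ) ^ ((j : ℕ) * k) - 1)) =
      ∑ i ∈ range n, (x i) ^ (j : ℕ) / (j : ℕ) := by
    intro j
    have hr1 : (1 : ℝ) < (p : ℝ) ^ ((j : ℕ) * k) := by
      apply one_lt_pow₀ hp1
      have := j.one_le
      positivity
    have hpm : (p : ℝ) ^ ((j : ℕ) * k * n) = ((p : ℝ) ^ ((j : ℕ) * k)) ^ n := pow_mul _ _ _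
    rw [hpm, ← geom_sum_eq (ne_of_gt hr1) n]
    rw [Finset.mul_sum]
    refine Finset.sum_congr rfl fun i hi => ?_
    have hx : ((p : ℝ) ^ (((k * i : ℕ) : ℝ) - s * ((k * n : ℕ) : ℝ))) ^ (j : ℕ) =
        (p : ℝ) ^ (-(s * ((j : ℕ) * k * n)) : ℝ) * ((p : ℝ) ^ ((j : ℕ) * k)) ^ i := by
      rw [← Real.rpow_natCast ((p : ℝ) ^ ((j : ℕ) * k)) i,
        ← Real.rpow_natCast (p : ℝ) ((j : ℕ) * k), ← Real.rpow_mul hp0.le,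
        ← Real.rpow_add hp0, ← Real.rpow_natCast
          ((p : ℝ) ^ (((k * i : ℕ) : ℝ) - s * ((k * n : ℕ) : ℝ))) (j : ℕ),
        ← Real.rpow_mul hp0.le]
      congr 1
      push_cast
      ring
    simp only [hxdef]
    rw [hx]
    ring
  calc (∑' j : ℕ+, (1 / (j : ℝ)) * (p : ℝ) ^ (-(s * ((j : ℕ) * k * n))) *
        (((p : ℝ) ^ ((j : ℕ) * k * n) - 1) / ((p : ℝ) ^ ((j : ℕ) * k) - 1)))
      = ∑' j : ℕ+, ∑ i ∈ range n, (x i) ^ (j : ℕ) / (j : ℕ) := tsum_congr key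
    _ = ∑ i ∈ range n, ∑' j : ℕ+, (x i) ^ (j : ℕ) / (j : ℕ) :=
        Summable.tsum_finsetSum fun i hi => (hsum i hi).summable
    _ = ∑ i ∈ range n, -Real.log (1 - x i) :=
        Finset.sum_congr rfl fun i hi => (hsum i hi).tsum_eq
    _ = ∑ i ∈ range n, -Real.log (1 - (p : ℝ) ^ ((k * i : ℕ) - s * (k * n : ℕ))) := by
        refine Finset.sum_congr rfl fun i _ => ?_
        rw [hxdef]
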